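/- arXiv:math/0601502 — 6 statements merged into one kernel-verified Lean document; each statement's English description precedes it below -/
import Mathlib

section
/- Let V be a finite-dimensional vector space over Z_p (p odd) with a possibly singular symmetric bilinear form, n = dim V and r = dim(rad V). Then the group Ô(V) of isometries acting trivially on rad V is isomorphic to a semidirect product of (Z_p)^{r(n−r)} by O(V / rad V). -/
open Submodule
namespace OhatAux

/-- Transfer a semidirect product along an isomorphism of the normal part. -/
def congrN {N N' H : Type*} [Group N] [Group N'] [Group H]
    (e : N ≃* N') (φ : H →* MulAut N) :
    N ⋊[φ] H ≃* N' ⋊[(MulAut.congr e).toMonoidHom.comp φ] H where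
  toFun x := ⟨e x.left, x.right⟩
  invFun x := ⟨e.symm x.left, x.right⟩
  left_inv x := by ext <;> simp
  right_inv x := by ext <;> simp
  map_mul' x y := by
    ext <;> simp only [SemidirectProduct.mul_left, SemidirectProduct.mul_right] <;> simp [MulAut.congr]


section G

variable {K V : Type*} [Field K] [AddCommGroup V] [Module K V] (rad : Submodule K V)

def u (f : (V ⧸ rad) →ₗ[K] rad) : V →ₗ[K] V := rad.subtype ∘ₗ f ∘ₗ rad.mkQ

lemma u_apply (f : (V ⧸ rad) →ₗ[K] rad) (x : V) :
    u rad f x = (f (Submodule.Quotient.mk x) : V) := rfl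

lemma u_u (f f' : (V ⧸ rad) →ₗ[K] rad) (x : V) : u rad f (u rad f' x) = 0 := by
  rw [u_apply, u_apply]
  have : (Submodule.Quotient.mk ((f' (Submodule.Quotient.mk x) : V)) : V ⧸ rad) = 0 :=
    (Submodule.Quotient.mk_eq_zero _).2 (Submodule.coe_mem _)
  rw [this, map_zero]; rfl

def gmap (f : (V ⧸ rad) →ₗ[K] rad) : V ≃ₗ[K] V :=
  LinearEquiv.ofLinear (LinearMap.id + u rad f) (LinearMap.id - u rad f)
    (by ext x; simp [u_u, map_sub]) (by ext x; simp [u_u, map_add])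

lemma gmap_apply (f : (V ⧸ rad) →ₗ[K] rad) (x : V) :
    gmap rad f x = x + (f (Submodule.Quotient.mk x) : V) := rfl

lemma mk_gmap (f : (V ⧸ rad) →ₗ[K] rad) (x : V) :
    (Submodule.Quotient.mk (gmap rad f x) : V ⧸ rad) = Submodule.Quotient.mk x := by
  rw [gmap_apply, Submodule.Quotient.mk_add,
    (Submodule.Quotient.mk_eq_zero _).2 (Submodule.coe_mem _), add_zero]

lemma gmap_add (f f' : (V ⧸ rad) →ₗ[K] rad) :
    gmap rad (f + f') = gmap rad f * gmap rad f' := by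
  apply LinearEquiv.toLinearMap_injective
  apply LinearMap.ext; intro x
  show gmap rad (f + f') x = gmap rad f (gmap rad f' x)
  rw [gmap_apply, gmap_apply, gmap_apply]
  have h0 : (Submodule.Quotient.mk (x + ((f' (Submodule.Quotient.mk x)) : V)) : V ⧸ rad)
      = Submodule.Quotient.mk x := by
    rw [Submodule.Quotient.mk_add, (Submodule.Quotient.mk_eq_zero _).2 (Submodule.coe_mem _),
      add_zero]
  rw [h0]
  simp only [LinearMap.add_apply, Submodule.coe_add]
  abel

end G

section S
variable {K V : Type*} [Field K] [AddCommGroup V] [Module K V] (rad W : Submodule K V)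
  (hW : IsCompl rad W)

/-- Lift an automorphism of `V ⧸ rad` to `V` using a complement `W` of `rad`. -/
noncomputable def smap (h : (V ⧸ rad) ≃ₗ[K] (V ⧸ rad)) : V ≃ₗ[K] V :=
  (Submodule.prodEquivOfIsCompl rad W hW).symm ≪≫ₗ
    (LinearEquiv.prodCongr (LinearEquiv.refl K rad)
      ((Submodule.quotientEquivOfIsCompl rad W hW).symm ≪≫ₗ h ≪≫ₗ
        Submodule.quotientEquivOfIsCompl rad W hW)) ≪≫ₗ
    Submodule.prodEquivOfIsCompl rad W hW

lemma smap_apply_add (h : (V ⧸ rad) ≃ₗ[K] (V ⧸ rad)) (z : rad) (w : W) :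
    smap rad W hW h (z + w) =
      z + (Submodule.quotientEquivOfIsCompl rad W hW
        (h ((Submodule.quotientEquivOfIsCompl rad W hW).symm w)) : V) := by
  have h1 : (Submodule.prodEquivOfIsCompl rad W hW).symm ((z : V) + (w : V)) = (z, w) := by
    rw [LinearEquiv.symm_apply_eq, Submodule.coe_prodEquivOfIsCompl']
  simp [smap, h1]

lemma exists_decomp (hW : IsCompl rad W) (x : V) : ∃ (z : rad) (w : W), x = (z : V) + w := by
  have hx : x ∈ rad ⊔ W := by rw [hW.codisjoint.eq_top]; trivial
  obtain ⟨z, hz, w, hw, rfl⟩ := Submodule.mem_sup.mp hx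
  exact ⟨⟨z, hz⟩, ⟨w, hw⟩, rfl⟩

lemma smap_rad (h : (V ⧸ rad) ≃ₗ[K] (V ⧸ rad)) (z : rad) :
    smap rad W hW h z = z := by
  have := smap_apply_add rad W hW h z 0
  simpa using this

lemma mk_smap (h : (V ⧸ rad) ≃ₗ[K] (V ⧸ rad)) (x : V) :
    (Submodule.Quotient.mk (smap rad W hW h x) : V ⧸ rad) = h (Submodule.Quotient.mk x) := by
  obtain ⟨z, w, rfl⟩ := exists_decomp rad W hW x
  rw [smap_apply_add]
  have hz : (Submodule.Quotient.mk (z : V) : V ⧸ rad) = 0 :=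
    (Submodule.Quotient.mk_eq_zero _).2 z.2
  have hmk : ∀ y : V ⧸ rad,
      (Submodule.Quotient.mk ((Submodule.quotientEquivOfIsCompl rad W hW y : V)) : V ⧸ rad) = y :=
    fun y => Submodule.mk_quotientEquivOfIsCompl_apply hW y
  have hw : ((Submodule.quotientEquivOfIsCompl rad W hW).symm w) =
      (Submodule.Quotient.mk (w : V) : V ⧸ rad) :=
    Submodule.quotientEquivOfIsCompl_symm_apply rad W hW w
  rw [Submodule.Quotient.mk_add, Submodule.Quotient.mk_add, hmk, hw, hz]
  simp

lemma smap_one : smap rad W hW 1 = 1 := by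
  apply LinearEquiv.toLinearMap_injective
  apply LinearMap.ext; intro x
  obtain ⟨z, w, rfl⟩ := exists_decomp rad W hW x
  show smap rad W hW 1 ((z:V) + w) = (z:V) + w
  rw [smap_apply_add]
  show _ + (Submodule.quotientEquivOfIsCompl rad W hW
      ((Submodule.quotientEquivOfIsCompl rad W hW).symm w) : V) = _
  rw [LinearEquiv.apply_symm_apply]

lemma smap_mul (h₁ h₂ : (V ⧸ rad) ≃ₗ[K] (V ⧸ rad)) :
    smap rad W hW (h₁ * h₂) = smap rad W hW h₁ * smap rad W hW h₂ := by
  apply LinearEquiv.toLinearMap_injective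
  apply LinearMap.ext; intro x
  obtain ⟨z, w, rfl⟩ := exists_decomp rad W hW x
  show smap rad W hW (h₁ * h₂) ((z:V) + w)
    = smap rad W hW h₁ (smap rad W hW h₂ ((z:V) + w))
  rw [smap_apply_add, smap_apply_add, smap_apply_add, LinearEquiv.symm_apply_apply]
  rfl

end S

end OhatAux

namespace OhatAux
open Submodule

theorem main {K V : Type*} [Field K] [AddCommGroup V] [Module K V]
    (B : V →ₗ[K] V →ₗ[K] K)
    (rad : Submodule K V)
    (Ohat : Subgroup (V ≃ₗ[K] V))
    (hOhat : ∀ g, g ∈ Ohat ↔ ((∀ x y, B (g x) (g y) = B x y) ∧ ∀ x ∈ rad, g x = x))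
    (B' : (V ⧸ rad) →ₗ[K] (V ⧸ rad) →ₗ[K] K)
    (hB' : ∀ x y : V, B' (Submodule.Quotient.mk x) (Submodule.Quotient.mk y) = B x y)
    (OQ : Subgroup ((V ⧸ rad) ≃ₗ[K] (V ⧸ rad)))
    (hOQ : ∀ h, h ∈ OQ ↔ ∀ x y : V ⧸ rad, B' (h x) (h y) = B' x y) :
    ∃ φ0 : OQ →* MulAut (Multiplicative ((V ⧸ rad) →ₗ[K] rad)),
      Nonempty ((Multiplicative ((V ⧸ rad) →ₗ[K] rad)) ⋊[φ0] OQ ≃* Ohat) := by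
  classical
  obtain ⟨W, hW⟩ := Submodule.exists_isCompl rad
  have key : ∀ x y : V, B x y = B' (Submodule.Quotient.mk x) (Submodule.Quotient.mk y) :=
    fun x y => (hB' x y).symm
  have gmem : ∀ f : (V ⧸ rad) →ₗ[K] rad, gmap rad f ∈ Ohat := by
    intro f
    rw [hOhat]
    refine ⟨fun x y => ?_, fun x hx => ?_⟩
    · rw [key, key x y, mk_gmap, mk_gmap]
    · rw [gmap_apply, (Submodule.Quotient.mk_eq_zero _).2 hx, map_zero]
      simp
  have smem : ∀ h : OQ, smap rad W hW (h : (V ⧸ rad) ≃ₗ[K] (V ⧸ rad)) ∈ Ohat := by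
    intro h
    rw [hOhat]
    refine ⟨fun x y => ?_, fun x hx => ?_⟩
    · rw [key, key x y, mk_smap, mk_smap]
      exact (hOQ _).1 h.2 _ _
    · exact smap_rad rad W hW _ ⟨x, hx⟩
  -- the homomorphism ι
  let ι : Multiplicative ((V ⧸ rad) →ₗ[K] rad) →* Ohat :=
    { toFun := fun f => ⟨gmap rad f.toAdd, gmem _⟩
      map_one' := by
        apply Subtype.ext
        show gmap rad (0 : (V ⧸ rad) →ₗ[K] rad) = 1
        apply LinearEquiv.toLinearMap_injective
        apply LinearMap.ext; intro x
        show gmap rad 0 x = x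
        rw [gmap_apply]; simp
      map_mul' := fun f f' => by
        apply Subtype.ext
        show gmap rad (f.toAdd + f'.toAdd) = _
        rw [gmap_add]; rfl }
  -- the homomorphism s'
  let s' : OQ →* Ohat :=
    { toFun := fun h => ⟨smap rad W hW (h : (V ⧸ rad) ≃ₗ[K] (V ⧸ rad)), smem h⟩
      map_one' := Subtype.ext (smap_one rad W hW)
      map_mul' := fun h₁ h₂ => Subtype.ext (smap_mul rad W hW _ _) }
  -- the action φ0
  let pre : OQ → ((V ⧸ rad) →ₗ[K] rad) ≃+ ((V ⧸ rad) →ₗ[K] rad) := fun h =>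
    (LinearEquiv.arrowCongr (h : (V ⧸ rad) ≃ₗ[K] (V ⧸ rad))
      (LinearEquiv.refl K rad)).toAddEquiv
  have pre_apply : ∀ (h : OQ) (f : (V ⧸ rad) →ₗ[K] rad) (x : V ⧸ rad),
      pre h f x = f ((h : (V ⧸ rad) ≃ₗ[K] (V ⧸ rad)).symm x) := fun h f x => rfl
  let φ0 : OQ →* MulAut (Multiplicative ((V ⧸ rad) →ₗ[K] rad)) :=
    { toFun := fun h => AddEquiv.toMultiplicative (pre h)
      map_one' := by
        apply MulEquiv.ext; intro f
        apply Multiplicative.toAdd.injective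
        apply LinearMap.ext; intro x
        show pre 1 f.toAdd x = f.toAdd x
        rw [pre_apply]
        rfl
      map_mul' := fun h₁ h₂ => by
        apply MulEquiv.ext; intro f
        apply Multiplicative.toAdd.injective
        apply LinearMap.ext; intro x
        show pre (h₁ * h₂) f.toAdd x = pre h₁ (pre h₂ f.toAdd) x
        rw [pre_apply, pre_apply, pre_apply]
        rfl }
  -- the quotient of smap ∘ symm
  have hy : ∀ (h : OQ) (x : V),
      (Submodule.Quotient.mk ((smap rad W hW (h : (V ⧸ rad) ≃ₗ[K] (V ⧸ rad))).symm x) : V ⧸ rad)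
        = (h : (V ⧸ rad) ≃ₗ[K] (V ⧸ rad)).symm (Submodule.Quotient.mk x) := by
    intro h x
    apply (h : (V ⧸ rad) ≃ₗ[K] (V ⧸ rad)).injective
    rw [LinearEquiv.apply_symm_apply,
      ← mk_smap rad W hW (h : (V ⧸ rad) ≃ₗ[K] (V ⧸ rad))
        ((smap rad W hW (h : (V ⧸ rad) ≃ₗ[K] (V ⧸ rad))).symm x),
      LinearEquiv.apply_symm_apply]
  -- compatibility
  have compat : ∀ h : OQ, ι.comp (φ0 h).toMonoidHom
      = (MulAut.conj (s' h)).toMonoidHom.comp ι := by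
    intro h
    apply MonoidHom.ext; intro f
    apply Subtype.ext
    apply LinearEquiv.toLinearMap_injective
    apply LinearMap.ext; intro x
    show gmap rad (pre h f.toAdd) x
      = smap rad W hW (h : (V ⧸ rad) ≃ₗ[K] (V ⧸ rad)) (gmap rad f.toAdd
          ((smap rad W hW (h : (V ⧸ rad) ≃ₗ[K] (V ⧸ rad))).symm x))
    rw [gmap_apply, gmap_apply, map_add, LinearEquiv.apply_symm_apply, hy, pre_apply]
    congr 1
    exact (smap_rad rad W hW (h : (V ⧸ rad) ≃ₗ[K] (V ⧸ rad))
      (f.toAdd ((h : (V ⧸ rad) ≃ₗ[K] (V ⧸ rad)).symm (Submodule.Quotient.mk x)))).symm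
  -- the homomorphism Ψ
  let Ψ := SemidirectProduct.lift ι s' compat
  have Ψ_apply : ∀ a, Ψ a = ι a.left * s' a.right := fun a => rfl
  refine ⟨φ0, ⟨(MulEquiv.ofBijective Ψ ⟨?_, ?_⟩)⟩⟩
  · -- injective
    rw [injective_iff_map_eq_one]
    intro a ha
    rw [Ψ_apply] at ha
    have ha' : gmap rad a.left.toAdd
        * smap rad W hW (a.right : (V ⧸ rad) ≃ₗ[K] (V ⧸ rad)) = 1 :=
      congrArg Subtype.val ha
    have hr : (a.right : (V ⧸ rad) ≃ₗ[K] (V ⧸ rad)) = 1 := by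
      apply LinearEquiv.toLinearMap_injective
      apply LinearMap.ext; intro q
      obtain ⟨x, rfl⟩ := Submodule.Quotient.mk_surjective rad q
      have h2 : gmap rad a.left.toAdd
          (smap rad W hW (a.right : (V ⧸ rad) ≃ₗ[K] (V ⧸ rad)) x) = x := by
        rw [show gmap rad a.left.toAdd
            (smap rad W hW (a.right : (V ⧸ rad) ≃ₗ[K] (V ⧸ rad)) x)
          = (gmap rad a.left.toAdd
            * smap rad W hW (a.right : (V ⧸ rad) ≃ₗ[K] (V ⧸ rad))) x from rfl, ha']
        rfl
      have h3 := congrArg (fun v : V => (Submodule.Quotient.mk v : V ⧸ rad)) h2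
      rw [mk_gmap, mk_smap] at h3
      exact h3
    have hrr : a.right = 1 := Subtype.ext hr
    have hg : gmap rad a.left.toAdd = 1 := by
      rw [hr, smap_one rad W hW, mul_one] at ha'
      exact ha'
    have hf : a.left.toAdd = 0 := by
      apply LinearMap.ext; intro q
      obtain ⟨x, rfl⟩ := Submodule.Quotient.mk_surjective rad q
      have h2 : gmap rad a.left.toAdd x = x := by rw [hg]; rfl
      rw [gmap_apply] at h2
      have h3 : ((a.left.toAdd (Submodule.Quotient.mk x)) : V) = 0 := add_eq_left.mp h2
      rw [LinearMap.zero_apply]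
      exact Submodule.coe_eq_zero.1 h3
    apply SemidirectProduct.ext
    · show a.left = 1
      apply Multiplicative.toAdd.injective
      exact hf
    · exact hrr
  · -- surjective
    intro g
    have hmap : rad.map ((g : V ≃ₗ[K] V) : V →ₗ[K] V) = rad := by
      apply le_antisymm
      · rintro y ⟨z, hz, rfl⟩
        have := ((hOhat g).1 g.2).2 z hz
        simpa [this] using hz
      · intro z hz
        exact ⟨z, hz, ((hOhat g).1 g.2).2 z hz⟩
    let hq : (V ⧸ rad) ≃ₗ[K] (V ⧸ rad) := Submodule.Quotient.equiv rad rad (g : V ≃ₗ[K] V) hmap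
    have hq_apply : ∀ x : V, hq (Submodule.Quotient.mk x)
        = Submodule.Quotient.mk ((g : V ≃ₗ[K] V) x) := by
      intro x
      show Submodule.Quotient.equiv rad rad (g : V ≃ₗ[K] V) hmap (Submodule.Quotient.mk x) = _
      rw [Submodule.Quotient.equiv_apply, Submodule.mapQ_apply]
      rfl
    have hqOQ : hq ∈ OQ := by
      rw [hOQ]
      intro a b
      obtain ⟨x, rfl⟩ := Submodule.Quotient.mk_surjective rad a
      obtain ⟨y, rfl⟩ := Submodule.Quotient.mk_surjective rad b
      rw [hq_apply, hq_apply, hB', hB']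
      exact ((hOhat g).1 g.2).1 x y
    let hh : OQ := ⟨hq, hqOQ⟩
    let k : Ohat := g * (s' hh)⁻¹
    have hmkk : ∀ x : V, (Submodule.Quotient.mk ((k : V ≃ₗ[K] V) x) : V ⧸ rad)
        = Submodule.Quotient.mk x := by
      intro x
      have h1 : (k : V ≃ₗ[K] V) x
          = (g : V ≃ₗ[K] V) ((smap rad W hW hq).symm x) := rfl
      rw [h1, ← hq_apply, hy hh x]
      show hq (hq.symm _) = _
      rw [LinearEquiv.apply_symm_apply]
    have hsub : ∀ x : V, (k : V ≃ₗ[K] V) x - x ∈ rad := by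
      intro x
      exact (Submodule.Quotient.eq rad).1 (hmkk x)
    let F : V →ₗ[K] rad := LinearMap.codRestrict rad
      (((k : V ≃ₗ[K] V) : V →ₗ[K] V) - LinearMap.id) hsub
    have hker : rad ≤ LinearMap.ker F := by
      intro z hz
      have hkz : (k : V ≃ₗ[K] V) z = z := ((hOhat k).1 k.2).2 z hz
      rw [LinearMap.mem_ker]
      apply Subtype.ext
      show (k : V ≃ₗ[K] V) z - z = 0
      rw [hkz, sub_self]
    let f : (V ⧸ rad) →ₗ[K] rad := rad.liftQ F hker
    have hιf : ι (Multiplicative.ofAdd f) = k := by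
      apply Subtype.ext
      apply LinearEquiv.toLinearMap_injective
      apply LinearMap.ext; intro x
      show gmap rad f x = (k : V ≃ₗ[K] V) x
      rw [gmap_apply]
      show x + ((rad.liftQ F hker) (Submodule.Quotient.mk x) : V) = _
      rw [Submodule.liftQ_apply]
      show x + ((k : V ≃ₗ[K] V) x - x) = _
      abel
    refine ⟨⟨Multiplicative.ofAdd f, hh⟩, ?_⟩
    rw [Ψ_apply]
    show ι (Multiplicative.ofAdd f) * s' hh = g
    rw [hιf]
    show g * (s' hh)⁻¹ * s' hh = g
    group

end OhatAux

/-- For `V` over `ZMod p` with a possibly singular symmetric bilinear form, `n = dim V`,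
`r = dim rad V`, the group `Ô(V)` of isometries acting trivially on the radical is
isomorphic to a semidirect product of `(ZMod p)^{r(n-r)}` by the orthogonal group of the
induced form on `V / rad V`. -/
theorem Ohat_iso_semidirectProduct (p : ℕ) [hp : Fact p.Prime] (hodd : p ≠ 2)
    (V : Type*) [AddCommGroup V] [Module (ZMod p) V] [FiniteDimensional (ZMod p) V]
    (B : V →ₗ[ZMod p] V →ₗ[ZMod p] ZMod p) (hsymm : ∀ x y, B x y = B y x)
    (rad : Submodule (ZMod p) V) (hrad : rad = LinearMap.BilinForm.orthogonal B ⊤)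
    (n r : ℕ) (hn : n = Module.finrank (ZMod p) V) (hr : r = Module.finrank (ZMod p) rad)
    (Ohat : Subgroup (V ≃ₗ[ZMod p] V))
    (hOhat : ∀ g, g ∈ Ohat ↔ ((∀ x y, B (g x) (g y) = B x y) ∧ ∀ x ∈ rad, g x = x))
    (B' : (V ⧸ rad) →ₗ[ZMod p] (V ⧸ rad) →ₗ[ZMod p] ZMod p)
    (hB' : ∀ x y : V, B' (Submodule.Quotient.mk x) (Submodule.Quotient.mk y) = B x y)
    (OQ : Subgroup ((V ⧸ rad) ≃ₗ[ZMod p] (V ⧸ rad)))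
    (hOQ : ∀ h, h ∈ OQ ↔ ∀ x y : V ⧸ rad, B' (h x) (h y) = B' x y) :
    ∃ φ : OQ →* MulAut (Multiplicative (Fin (r * (n - r)) → ZMod p)),
      Nonempty (Ohat ≃* (Multiplicative (Fin (r * (n - r)) → ZMod p)) ⋊[φ] OQ) := by
  classical
  obtain ⟨φ0, ⟨iso0⟩⟩ := OhatAux.main B rad Ohat hOhat B' hB' OQ hOQ
  have hfr : Module.finrank (ZMod p) ((V ⧸ rad) →ₗ[ZMod p] rad) = r * (n - r) := by
    rw [Module.finrank_linearMap]
    have h1 : Module.finrank (ZMod p) (V ⧸ rad) + Module.finrank (ZMod p) rad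
        = Module.finrank (ZMod p) V := Submodule.finrank_quotient_add_finrank rad
    have h2 : r ≤ n := by rw [hn, hr]; exact Submodule.finrank_le rad
    have h3 : Module.finrank (ZMod p) (V ⧸ rad) = n - r := by omega
    rw [h3, ← hr, Nat.mul_comm]
  have hfin : Module.finrank (ZMod p) (Fin (r * (n - r)) → ZMod p) = r * (n - r) :=
    Module.finrank_fin_fun (ZMod p)
  obtain ⟨L⟩ := FiniteDimensional.nonempty_linearEquiv_of_finrank_eq
    (R := ZMod p) (M := (V ⧸ rad) →ₗ[ZMod p] rad) (M' := Fin (r * (n - r)) → ZMod p)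
    (hfr.trans hfin.symm)
  let E : Multiplicative ((V ⧸ rad) →ₗ[ZMod p] rad)
      ≃* Multiplicative (Fin (r * (n - r)) → ZMod p) :=
    AddEquiv.toMultiplicative L.toAddEquiv
  exact ⟨(MulAut.congr E).toMonoidHom.comp φ0, ⟨iso0.symm.trans (OhatAux.congrN E φ0)⟩⟩
end

section
/- Let V be a 2-dimensional vector space over Z_p (p an odd prime) with a symmetric bilinear form whose radical is 1-dimensional, spanned by a vector c, and let b be a vector with b·b ≠ 0 so that b, c is a basis of V. Then every element of Ô(V) (isometries acting trivially on rad V) is represented in the basis b, c by a matrix of the form [[±1, 0],[μ, 1]] with μ ∈ Z_p; in particular |Ô(V)| = 2p and Ô(V) is a dihedral group of order 2p. -/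
/-- For a 2-dimensional space over `ZMod p` with 1-dimensional radical spanned by `c` and
anisotropic `b` with `b, c` a basis, every element of `Ô(V)` has matrix `[[±1,0],[μ,1]]`
in the basis `b, c`; consequently `|Ô(V)| = 2p` and `Ô(V)` is dihedral of order `2p`. -/
theorem Ohat_of_singular_plane (p : ℕ) [hp : Fact p.Prime] (hodd : p ≠ 2)
    (V : Type*) [AddCommGroup V] [Module (ZMod p) V] [FiniteDimensional (ZMod p) V]
    (B : V →ₗ[ZMod p] V →ₗ[ZMod p] ZMod p) (hsymm : ∀ x y, B x y = B y x)
    (b c : V) (hind : LinearIndependent (ZMod p) ![b, c])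
    (hspan : Submodule.span (ZMod p) {b, c} = ⊤)
    (hb : B b b ≠ 0)
    (hrad : LinearMap.BilinForm.orthogonal B ⊤ = Submodule.span (ZMod p) {c})
    (Ohat : Subgroup (V ≃ₗ[ZMod p] V))
    (hOhat : ∀ g, g ∈ Ohat ↔ ((∀ x y, B (g x) (g y) = B x y) ∧
      ∀ x ∈ Submodule.span (ZMod p) {c}, g x = x)) :
    (∀ g ∈ Ohat, ∃ ε μ : ZMod p, (ε = 1 ∨ ε = -1) ∧ g b = ε • b + μ • c ∧ g c = c) ∧
    Nat.card Ohat = 2 * p ∧ Nonempty (Ohat ≃* DihedralGroup p) := by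
  classical
  haveI : NeZero p := ⟨hp.out.ne_zero⟩
  -- the radical kills everything
  have hxc : ∀ x, B x c = 0 := by
    intro x
    have hc : c ∈ LinearMap.BilinForm.orthogonal B ⊤ := by
      rw [hrad]; exact Submodule.mem_span_singleton_self c
    exact hc x Submodule.mem_top
  have hcx : ∀ x, B c x = 0 := fun x => (hsymm c x).trans (hxc x)
  -- basis
  have hspan' : ⊤ ≤ Submodule.span (ZMod p) (Set.range ![b, c]) := by
    rw [show Set.range ![b, c] = {b, c} by
      simp [Matrix.range_cons, Matrix.range_empty, Set.pair_comm]]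
    rw [hspan]
  set Bas : Module.Basis (Fin 2) (ZMod p) V := Module.Basis.mk hind hspan' with hBas
  have hB0 : Bas 0 = b := by simp [hBas]
  have hB1 : Bas 1 = c := by simp [hBas]
  have hrepr : ∀ α β : ZMod p,
      Bas.repr (α • b + β • c) = Finsupp.single 0 α + Finsupp.single 1 β := by
    intro α β
    rw [← hB0, ← hB1]
    simp [Finsupp.smul_single]
  have hrepr0 : ∀ α β : ZMod p, Bas.repr (α • b + β • c) 0 = α := by
    intro α β; rw [hrepr]; simp
  have hrepr1 : ∀ α β : ZMod p, Bas.repr (α • b + β • c) 1 = β := by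
    intro α β; rw [hrepr]; simp
  have hdecomp : ∀ x : V, x = Bas.repr x 0 • b + Bas.repr x 1 • c := by
    intro x
    have h := Bas.sum_repr x
    rw [Fin.sum_univ_two, hB0, hB1] at h
    exact h.symm
  have hne : (1 : ZMod p) ≠ -1 := by
    intro h
    have h2 : (2 : ZMod p) = 0 := by
      have := h.symm
      rw [neg_eq_iff_add_eq_zero] at this
      linear_combination this
    rw [show ((2:ZMod p)) = ((2:ℕ) : ZMod p) by norm_num, ZMod.natCast_eq_zero_iff] at h2
    exact hodd ((Nat.prime_dvd_prime_iff_eq hp.out Nat.prime_two).mp h2)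
  -- representation of elements of Ohat
  have hrepOf : ∀ g : V ≃ₗ[ZMod p] V, g ∈ Ohat →
      (g b = Bas.repr (g b) 0 • b + Bas.repr (g b) 1 • c ∧
       (Bas.repr (g b) 0) * (Bas.repr (g b) 0) = 1 ∧ g c = c) := by
    intro g hg
    obtain ⟨hiso, hfix⟩ := (hOhat g).mp hg
    have hgc : g c = c := hfix c (Submodule.mem_span_singleton_self c)
    have hgb := hdecomp (g b)
    set α := Bas.repr (g b) 0
    set β := Bas.repr (g b) 1
    have hsq : α * α = 1 := by
      have h1 : B (g b) (g b) = B b b := hiso b b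
      rw [hgb] at h1
      simp only [map_add, map_smul, LinearMap.add_apply, LinearMap.smul_apply,
        smul_eq_mul, hxc, hcx, mul_zero, add_zero, zero_add, LinearMap.zero_apply] at h1
      have : (α * α - 1) * B b b = 0 := by ring_nf; linear_combination h1
      rcases mul_eq_zero.mp this with h | h
      · linear_combination h
      · exact absurd h hb
    exact ⟨hgb, hsq, hgc⟩
  -- construction of elements of Ohat
  have hconstr : ∀ ε μ : ZMod p, ε * ε = 1 →
      ∃ g : V ≃ₗ[ZMod p] V, g ∈ Ohat ∧ g b = ε • b + μ • c ∧ g c = c := by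
    intro ε μ hε
    set f : V →ₗ[ZMod p] V := Bas.constr (ZMod p) ![ε • b + μ • c, c] with hf
    set f' : V →ₗ[ZMod p] V := Bas.constr (ZMod p) ![ε • b - (ε*μ) • c, c] with hf'
    have hfb : f b = ε • b + μ • c := by
      have h := Bas.constr_basis (ZMod p) ![ε • b + μ • c, c] 0
      rw [hB0] at h
      simpa only [Matrix.cons_val_zero] using h
    have hfc : f c = c := by
      have h := Bas.constr_basis (ZMod p) ![ε • b + μ • c, c] 1
      rw [hB1] at h
      simpa only [Matrix.cons_val_one, Matrix.head_cons, Matrix.cons_val_zero] using h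
    have hfb' : f' b = ε • b - (ε*μ) • c := by
      have h := Bas.constr_basis (ZMod p) ![ε • b - (ε*μ) • c, c] 0
      rw [hB0] at h
      simpa only [Matrix.cons_val_zero] using h
    have hfc' : f' c = c := by
      have h := Bas.constr_basis (ZMod p) ![ε • b - (ε*μ) • c, c] 1
      rw [hB1] at h
      simpa only [Matrix.cons_val_one, Matrix.head_cons, Matrix.cons_val_zero] using h
    have h1 : f.comp f' = LinearMap.id := by
      apply Bas.ext; intro i
      fin_cases i
      · show f (f' (Bas 0)) = Bas 0
        rw [hB0, hfb', map_sub, map_smul, map_smul, hfb, hfc]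
        match_scalars
        · linear_combination hε
        · ring
      · show f (f' (Bas 1)) = Bas 1
        rw [hB1, hfc', hfc]
    have h2 : f'.comp f = LinearMap.id := by
      apply Bas.ext; intro i
      fin_cases i
      · show f' (f (Bas 0)) = Bas 0
        rw [hB0, hfb, map_add, map_smul, map_smul, hfb', hfc']
        match_scalars
        · linear_combination hε
        · linear_combination (-μ) * hε
      · show f' (f (Bas 1)) = Bas 1
        rw [hB1, hfc, hfc']
    set e : V ≃ₗ[ZMod p] V := LinearEquiv.ofLinear f f' h1 h2 with he
    have heapp : ∀ x, e x = f x := fun x => rfl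
    have hkey : B.compl₁₂ f f = B := by
      apply LinearMap.ext_basis Bas Bas
      intro i j
      fin_cases i <;> fin_cases j <;>
        simp only [Fin.zero_eta, Fin.mk_one, LinearMap.compl₁₂_apply, hB0, hB1, hfb, hfc,
          map_add, map_smul, LinearMap.add_apply, LinearMap.smul_apply, smul_eq_mul, hxc, hcx,
          mul_zero, add_zero, zero_add, LinearMap.zero_apply]
      linear_combination (B b b) * hε
    have hiso : ∀ x y, B (e x) (e y) = B x y := by
      intro x y
      have := LinearMap.congr_fun (LinearMap.congr_fun hkey x) y
      simpa [LinearMap.compl₁₂_apply, heapp] using this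
    have hfix : ∀ x ∈ Submodule.span (ZMod p) {c}, e x = x := by
      intro x hx
      obtain ⟨t, rfl⟩ := Submodule.mem_span_singleton.mp hx
      rw [heapp, map_smul, hfc]
    exact ⟨e, (hOhat e).mpr ⟨hiso, hfix⟩, by rw [heapp, hfb], by rw [heapp, hfc]⟩
  -- the ε, μ coordinates as functions on Ohat
  set εf : Ohat → ZMod p := fun g => Bas.repr ((g : V ≃ₗ[ZMod p] V) b) 0 with hεfdef
  set μf : Ohat → ZMod p := fun g => Bas.repr ((g : V ≃ₗ[ZMod p] V) b) 1 with hμfdef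
  have hprops : ∀ g : Ohat, (g : V ≃ₗ[ZMod p] V) b = εf g • b + μf g • c ∧
      εf g * εf g = 1 ∧ (g : V ≃ₗ[ZMod p] V) c = c := fun g => hrepOf g g.2
  have hεcases : ∀ g : Ohat, εf g = 1 ∨ εf g = -1 :=
    fun g => mul_self_eq_one_iff.mp (hprops g).2.1
  have hmulεμ : ∀ g₁ g₂ : Ohat, εf (g₁ * g₂) = εf g₂ * εf g₁ ∧
      μf (g₁ * g₂) = εf g₂ * μf g₁ + μf g₂ := by
    intro g₁ g₂
    have h12 : ((g₁ * g₂ : Ohat) : V ≃ₗ[ZMod p] V) b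
        = (εf g₂ * εf g₁) • b + (εf g₂ * μf g₁ + μf g₂) • c := by
      show (g₁ : V ≃ₗ[ZMod p] V) ((g₂ : V ≃ₗ[ZMod p] V) b) = _
      rw [(hprops g₂).1, map_add, map_smul, map_smul, (hprops g₁).1, (hprops g₁).2.2]
      match_scalars <;> ring
    constructor
    · show Bas.repr _ 0 = _
      rw [h12, hrepr0]
    · show Bas.repr _ 1 = _
      rw [h12, hrepr1]
  set φ0 : Ohat → DihedralGroup p :=
    fun g => if εf g = 1 then DihedralGroup.r (μf g) else DihedralGroup.sr (μf g) with hφ0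
  have hmap : ∀ g₁ g₂ : Ohat, φ0 (g₁ * g₂) = φ0 g₁ * φ0 g₂ := by
    intro g₁ g₂
    obtain ⟨he, hm⟩ := hmulεμ g₁ g₂
    simp only [hφ0]
    rcases hεcases g₁ with h1 | h1 <;> rcases hεcases g₂ with h2 | h2
    · rw [if_pos (by rw [he, h1, h2, one_mul] : εf (g₁*g₂) = 1), if_pos h1, if_pos h2,
        DihedralGroup.r_mul_r, hm, h2, one_mul]
    · rw [if_neg (by rw [he, h1, h2, mul_one]; exact Ne.symm hne), if_pos h1,
        if_neg (by rw [h2]; exact Ne.symm hne), DihedralGroup.r_mul_sr, hm, h2]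
      congr 1; ring
    · rw [if_neg (by rw [he, h1, h2, one_mul]; exact Ne.symm hne),
        if_neg (by rw [h1]; exact Ne.symm hne), if_pos h2, DihedralGroup.sr_mul_r, hm, h2, one_mul]
    · rw [if_pos (by rw [he, h1, h2]; ring : εf (g₁*g₂) = 1),
        if_neg (by rw [h1]; exact Ne.symm hne), if_neg (by rw [h2]; exact Ne.symm hne),
        DihedralGroup.sr_mul_sr, hm, h2]
      congr 1; ring
  set F : Ohat →* DihedralGroup p := MonoidHom.mk' φ0 hmap with hF
  have hFapp : ∀ g, F g = φ0 g := fun g => rfl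
  have hinj : Function.Injective F := by
    intro g₁ g₂ h
    have h' : φ0 g₁ = φ0 g₂ := h
    simp only [hφ0] at h'
    have hem : εf g₁ = εf g₂ ∧ μf g₁ = μf g₂ := by
      rcases hεcases g₁ with h1 | h1 <;> rcases hεcases g₂ with h2 | h2
      · rw [if_pos h1, if_pos h2] at h'
        exact ⟨h1.trans h2.symm, by injection h'⟩
      · rw [if_pos h1, if_neg (show εf g₂ ≠ 1 by rw [h2]; exact Ne.symm hne)] at h'
        exact absurd h' (by simp)
      · rw [if_neg (show εf g₁ ≠ 1 by rw [h1]; exact Ne.symm hne), if_pos h2] at h'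
        exact absurd h' (by simp)
      · rw [if_neg (show εf g₁ ≠ 1 by rw [h1]; exact Ne.symm hne),
          if_neg (show εf g₂ ≠ 1 by rw [h2]; exact Ne.symm hne)] at h'
        exact ⟨h1.trans h2.symm, by injection h'⟩
    have hgl : (g₁ : V ≃ₗ[ZMod p] V) = (g₂ : V ≃ₗ[ZMod p] V) := by
      apply LinearEquiv.toLinearMap_injective
      apply LinearMap.ext_on hspan
      intro x hx
      simp only [LinearEquiv.coe_coe]
      rcases hx with rfl | hx
      · rw [(hprops g₁).1, (hprops g₂).1, hem.1, hem.2]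
      · rw [Set.mem_singleton_iff] at hx
        subst hx
        rw [(hprops g₁).2.2, (hprops g₂).2.2]
    exact Subtype.ext hgl
  have hsurj : Function.Surjective F := by
    intro d
    cases d with
    | r μ =>
      obtain ⟨g, hg, hgb, hgc⟩ := hconstr 1 μ (by ring)
      refine ⟨⟨g, hg⟩, ?_⟩
      have hε1 : εf ⟨g, hg⟩ = 1 := by
        show Bas.repr (g b) 0 = 1
        rw [hgb, hrepr0]
      have hμ1 : μf ⟨g, hg⟩ = μ := by
        show Bas.repr (g b) 1 = μ
        rw [hgb, hrepr1]
      show φ0 _ = _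
      simp only [hφ0]
      rw [if_pos hε1, hμ1]
    | sr μ =>
      obtain ⟨g, hg, hgb, hgc⟩ := hconstr (-1) μ (by ring)
      refine ⟨⟨g, hg⟩, ?_⟩
      have hε1 : εf ⟨g, hg⟩ = -1 := by
        show Bas.repr (g b) 0 = -1
        rw [hgb, hrepr0]
      have hμ1 : μf ⟨g, hg⟩ = μ := by
        show Bas.repr (g b) 1 = μ
        rw [hgb, hrepr1]
      show φ0 _ = _
      simp only [hφ0]
      rw [if_neg (show εf ⟨g, hg⟩ ≠ 1 by rw [hε1]; exact Ne.symm hne), hμ1]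
  have hiso : Ohat ≃* DihedralGroup p := MulEquiv.ofBijective F ⟨hinj, hsurj⟩
  refine ⟨?_, ?_, ⟨hiso⟩⟩
  · intro g hg
    obtain ⟨h1, h2, h3⟩ := hrepOf g hg
    exact ⟨_, _, mul_self_eq_one_iff.mp h2, h1, h3⟩
  · rw [Nat.card_congr hiso.toEquiv, DihedralGroup.nat_card]
end

section
/- Let V be a non-singular finite-dimensional quadratic space over a field of odd characteristic, and let H be a singular hyperplane of V (i.e., rad H ≠ {0}). If g is an isometry of V that fixes H pointwise, then g is the identity on V. -/
/-- An isometry of a non-singular quadratic space fixing a singular hyperplane pointwise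
is the identity. -/
theorem isometry_fixing_singular_hyperplane (K : Type*) [Field K] (hchar : (2 : K) ≠ 0)
    (V : Type*) [AddCommGroup V] [Module K V] [FiniteDimensional K V]
    (B : V →ₗ[K] V →ₗ[K] K) (hsymm : ∀ x y, B x y = B y x)
    (hnd : ∀ x, (∀ y, B x y = 0) → x = 0)
    (H : Submodule K V)
    (hhyp : Module.finrank K H = Module.finrank K V - 1)
    (hlt : H ≠ ⊤)
    (hsing : ∃ x ∈ H, x ≠ 0 ∧ ∀ y ∈ H, B x y = 0)
    (g : V ≃ₗ[K] V) (hgiso : ∀ x y, B (g x) (g y) = B x y)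
    (hfix : ∀ x ∈ H, g x = x) :
    g = LinearEquiv.refl K V := by
  obtain ⟨u, huH, hu0, huorth⟩ := hsing
  have : Nontrivial V := nontrivial_of_ne u 0 hu0
  have hnpos : 0 < Module.finrank K V := Module.finrank_pos
  -- B u ≠ 0
  have hBu : B u ≠ 0 := fun h => hu0 (hnd u (fun y => by rw [h]; rfl))
  -- ker (B u) = H
  have hker_le : H ≤ LinearMap.ker (B u) := fun y hy =>
    LinearMap.mem_ker.mpr (huorth y hy)
  have hrange : LinearMap.range (B u) = ⊤ := by
    obtain ⟨y, hy⟩ : ∃ y, B u y ≠ 0 := by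
      by_contra h; push_neg at h; exact hBu (LinearMap.ext h)
    rw [eq_top_iff]; intro c _
    have hcy : c = (c * (B u y)⁻¹) • (B u y) := by
      rw [smul_eq_mul]; field_simp
    rw [hcy]
    exact Submodule.smul_mem _ _ ⟨y, rfl⟩
  have hkerrank : Module.finrank K (LinearMap.ker (B u)) = Module.finrank K V - 1 := by
    have h1 := LinearMap.finrank_range_add_finrank_ker (B u)
    rw [hrange, finrank_top, Module.finrank_self] at h1
    omega
  have hker : LinearMap.ker (B u) = H :=
    (Submodule.eq_of_le_of_finrank_le hker_le (by rw [hkerrank, hhyp])).symm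
  -- pick v ∉ H
  obtain ⟨v, hv⟩ : ∃ v, v ∉ H := by
    by_contra h; push_neg at h
    exact hlt (eq_top_iff.mpr fun x _ => h x)
  have hBuv : B u v ≠ 0 := fun h => hv (hker ▸ LinearMap.mem_ker.mpr h)
  -- H ⊔ span v = ⊤
  have hsup : H ⊔ Submodule.span K {v} = ⊤ := by
    have hlt' : H < H ⊔ Submodule.span K {v} :=
      lt_of_le_of_ne le_sup_left (fun h => hv (by
        have hm : v ∈ H ⊔ Submodule.span K {v} :=
          Submodule.mem_sup_right (Submodule.mem_span_singleton_self v)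
        rwa [← h] at hm))
    have h1 : Module.finrank K H < Module.finrank K ↥(H ⊔ Submodule.span K {v}) :=
      Submodule.finrank_lt_finrank_of_lt hlt'
    have h2 : Module.finrank K ↥(H ⊔ Submodule.span K {v}) ≤ Module.finrank K V :=
      Submodule.finrank_le _
    exact Submodule.eq_top_of_finrank_eq (by omega)
  have hdecomp : ∀ y : V, ∃ h ∈ H, ∃ t : K, y = h + t • v := by
    intro y
    have hy : y ∈ H ⊔ Submodule.span K {v} := hsup ▸ Submodule.mem_top
    obtain ⟨h, hh, s, hs, rfl⟩ := Submodule.mem_sup.mp hy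
    obtain ⟨t, rfl⟩ := Submodule.mem_span_singleton.mp hs
    exact ⟨h, hh, t, rfl⟩
  -- w := g v - v is B-orthogonal to H
  set w := g v - v with hw
  have hworth : ∀ x ∈ H, B w x = 0 := by
    intro x hx
    have h1 := hgiso x v
    rw [hfix x hx] at h1
    have h2 : B x w = 0 := by
      rw [hw, map_sub, h1, sub_self]
    rw [hsymm]; exact h2
  have hBuu : B u u = 0 := huorth u huH
  set c := B w v / B u v with hc
  have hwcu : w = c • u := by
    have key : ∀ y, B (w - c • u) y = 0 := by
      intro y
      obtain ⟨h, hh, t, rfl⟩ := hdecomp y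
      have e1 : B w h = 0 := hworth h hh
      have e2 : B u h = 0 := huorth h hh
      simp only [map_sub, map_add, map_smul, LinearMap.sub_apply, LinearMap.smul_apply,
        LinearMap.add_apply, e1, e2, smul_eq_mul, hc]
      field_simp
      ring
    exact sub_eq_zero.mp (hnd _ key)
  have hgveq : g v = v + c • u := by
    have : g v = v + w := by rw [hw]; abel
    rw [this, hwcu]
  have hgv : g v = v := by
    have hiso := hgiso v v
    rw [hgveq] at hiso
    have hvu : B v u = B u v := hsymm v u
    simp only [map_add, map_smul, LinearMap.add_apply, LinearMap.smul_apply, smul_eq_mul,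
      hBuu, hvu] at hiso
    have h2 : (2 : K) * c * B u v = 0 := by linear_combination hiso
    have hc0 : c = 0 := by
      rcases mul_eq_zero.mp h2 with h | h
      · rcases mul_eq_zero.mp h with h' | h'
        · exact absurd h' hchar
        · exact h'
      · exact absurd h hBuv
    rw [hgveq, hc0, zero_smul, add_zero]
  ext y
  obtain ⟨h, hh, t, rfl⟩ := hdecomp y
  simp [map_add, map_smul, hfix h hh, hgv]
end

section
/- Let Γ = ⟨ρ_0, ..., ρ_{n-1}⟩ be a group generated by involutions with string property (ρ_iρ_j = ρ_jρ_i whenever |i−j| ≥ 2). Then Γ satisfies the intersection property ⟨ρ_i : i ∈ I⟩ ∩ ⟨ρ_i : i ∈ J⟩ = ⟨ρ_i : i ∈ I∩J⟩ for all I, J ⊆ {0,...,n−1} if and only if the two subgroups Γ_0 = ⟨ρ_1,...,ρ_{n-1}⟩ and Γ_{n-1} = ⟨ρ_0,...,ρ_{n-2}⟩ each satisfy the intersection property (for their generating sets) and Γ_0 ∩ Γ_{n-1} = ⟨ρ_1,...,ρ_{n-2}⟩. -/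
theorem commute_closure {G : Type*} [Group G] {S T : Set G}
    (h : ∀ a ∈ S, ∀ b ∈ T, Commute a b) :
    ∀ x ∈ Subgroup.closure S, ∀ y ∈ Subgroup.closure T, Commute x y := by
  intro x hx
  refine Subgroup.closure_induction (fun a ha => ?_) (fun y hy => Commute.one_left y)
    (fun a b _ _ ha hb y hy => (ha y hy).mul_left (hb y hy))
    (fun a _ ha y hy => (ha y hy).inv_left) hx
  intro y hy
  refine Subgroup.closure_induction (fun b hb => h a ha b hb) (Commute.one_right a)
    (fun b c _ _ hb hc => hb.mul_right hc) (fun b _ hb => hb.inv_right) hy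

theorem closure_union_decomp {G : Type*} [Group G] {S T : Set G}
    (h : ∀ a ∈ S, ∀ b ∈ T, Commute a b) {g : G}
    (hg : g ∈ Subgroup.closure (S ∪ T)) :
    ∃ b ∈ Subgroup.closure S, ∃ c ∈ Subgroup.closure T, g = b * c := by
  refine Subgroup.closure_induction (p := fun g _ =>
      ∃ b ∈ Subgroup.closure S, ∃ c ∈ Subgroup.closure T, g = b * c)
    (fun x hx => ?_) ⟨1, one_mem _, 1, one_mem _, (one_mul 1).symm⟩
    (fun x y _ _ hx hy => ?_) (fun x _ hx => ?_) hg
  · rcases hx with hx | hx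
    · exact ⟨x, Subgroup.subset_closure hx, 1, one_mem _, (mul_one x).symm⟩
    · exact ⟨1, one_mem _, x, Subgroup.subset_closure hx, (one_mul x).symm⟩
  · obtain ⟨b₁, hb₁, c₁, hc₁, rfl⟩ := hx
    obtain ⟨b₂, hb₂, c₂, hc₂, rfl⟩ := hy
    refine ⟨b₁ * b₂, mul_mem hb₁ hb₂, c₁ * c₂, mul_mem hc₁ hc₂, ?_⟩
    have := (commute_closure h b₂ hb₂ c₁ hc₁).symm
    rw [mul_assoc, ← mul_assoc c₁, this.eq, mul_assoc, mul_assoc]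
  · obtain ⟨b, hb, c, hc, rfl⟩ := hx
    refine ⟨b⁻¹, inv_mem hb, c⁻¹, inv_mem hc, ?_⟩
    rw [mul_inv_rev, (commute_closure h b hb c hc).inv_inv.eq]

/-- A string group generated by involutions `ρ₀, …, ρ_{n-1}` satisfies the intersection
property for all pairs of subsets iff the subgroups `Γ₀ = ⟨ρ₁,…,ρ_{n-1}⟩` and
`Γ_{n-1} = ⟨ρ₀,…,ρ_{n-2}⟩` each satisfy the intersection property (for their generating
sets) and `Γ₀ ∩ Γ_{n-1} = ⟨ρ₁,…,ρ_{n-2}⟩`. -/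
theorem intersection_property_iff (n : ℕ) (hn : 1 ≤ n) (Γ : Type*) [Group Γ]
    (ρ : Fin n → Γ)
    (hgen : Subgroup.closure (Set.range ρ) = ⊤)
    (hinv : ∀ i, ρ i * ρ i = 1) (hne : ∀ i, ρ i ≠ 1)
    (hstring : ∀ i j : Fin n, (i : ℕ) + 2 ≤ (j : ℕ) → Commute (ρ i) (ρ j)) :
    (∀ I J : Set (Fin n),
        Subgroup.closure (ρ '' I) ⊓ Subgroup.closure (ρ '' J) =
          Subgroup.closure (ρ '' (I ∩ J))) ↔
      ((∀ I J : Set (Fin n), I ⊆ {i | (i : ℕ) ≠ 0} → J ⊆ {i | (i : ℕ) ≠ 0} →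
          Subgroup.closure (ρ '' I) ⊓ Subgroup.closure (ρ '' J) =
            Subgroup.closure (ρ '' (I ∩ J))) ∧
       (∀ I J : Set (Fin n), I ⊆ {i | (i : ℕ) ≠ n - 1} → J ⊆ {i | (i : ℕ) ≠ n - 1} →
          Subgroup.closure (ρ '' I) ⊓ Subgroup.closure (ρ '' J) =
            Subgroup.closure (ρ '' (I ∩ J))) ∧
       Subgroup.closure (ρ '' {i | (i : ℕ) ≠ 0}) ⊓
           Subgroup.closure (ρ '' {i | (i : ℕ) ≠ n - 1}) =
         Subgroup.closure (ρ '' {i | (i : ℕ) ≠ 0 ∧ (i : ℕ) ≠ n - 1})) := by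
  set M₀ : Set (Fin n) := {i | (i : ℕ) ≠ 0} with hM₀
  set M₁ : Set (Fin n) := {i | (i : ℕ) ≠ n - 1} with hM₁
  have hM01 : ({i : Fin n | (i : ℕ) ≠ 0 ∧ (i : ℕ) ≠ n - 1}) = M₀ ∩ M₁ := rfl
  constructor
  · intro h
    refine ⟨fun I J _ _ => h I J, fun I J _ _ => h I J, ?_⟩
    rw [hM01]; exact h M₀ M₁
  · rintro ⟨h₁, h₂, h₃⟩
    rw [hM01] at h₃
    have mono : ∀ {S T : Set (Fin n)}, S ⊆ T →
        Subgroup.closure (ρ '' S) ≤ Subgroup.closure (ρ '' T) :=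
      fun h => Subgroup.closure_mono (Set.image_mono h)
    set z : Fin n := ⟨0, hn⟩ with hz
    set lastF : Fin n := ⟨n - 1, by omega⟩ with hlast
    set Bk : Set (Fin n) → Set (Fin n) :=
      fun I => {i | i ∈ I ∧ ∀ j, j ≤ i → j ∈ I} with hBk
    have hBsub : ∀ I, Bk I ⊆ I := fun I i hi => hi.1
    have hCM0 : ∀ I : Set (Fin n), (I \ Bk I) ⊆ M₀ := by
      intro I i hi
      by_contra h0
      have h0 : (i : ℕ) = 0 := not_not.mp h0
      refine hi.2 ⟨hi.1, fun j hj => ?_⟩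
      have : j = i := Fin.ext (by have := Fin.le_def.mp hj; omega)
      exact this ▸ hi.1
    have hdecomp : ∀ I : Set (Fin n), ∀ g ∈ Subgroup.closure (ρ '' I),
        ∃ b ∈ Subgroup.closure (ρ '' Bk I),
          ∃ c ∈ Subgroup.closure (ρ '' (I \ Bk I)), g = b * c := by
      intro I g hg
      have hcomm : ∀ a ∈ ρ '' Bk I, ∀ b ∈ ρ '' (I \ Bk I), Commute a b := by
        rintro _ ⟨i, hi, rfl⟩ _ ⟨j, hj, rfl⟩
        refine hstring i j ?_
        have hjB : j ∉ Bk I := hj.2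
        simp only [hBk, Set.mem_setOf_eq, not_and, not_forall] at hjB
        obtain ⟨j', hj'le, hj'I⟩ := hjB hj.1
        have h1 : ¬ (j' ≤ i) := fun hle => hj'I (hi.2 j' hle)
        have h2 : j' ≠ j := fun he => hj'I (he ▸ hj.1)
        have h3 : (i : ℕ) < (j' : ℕ) := Fin.lt_def.mp (lt_of_not_ge h1)
        have h4 : (j' : ℕ) ≤ (j : ℕ) := Fin.le_def.mp hj'le
        have h5 : (j' : ℕ) ≠ (j : ℕ) := fun he => h2 (Fin.ext he)
        omega
      have himg : ρ '' Bk I ∪ ρ '' (I \ Bk I) = ρ '' I := by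
        rw [← Set.image_union, Set.union_diff_cancel (hBsub I)]
      exact closure_union_decomp hcomm (by rwa [himg])
    have key0 : ∀ J : Set (Fin n),
        Subgroup.closure (ρ '' J) ⊓ Subgroup.closure (ρ '' M₀) =
          Subgroup.closure (ρ '' (J ∩ M₀)) := by
      intro J
      refine le_antisymm ?_
        (le_inf (mono Set.inter_subset_left) (mono Set.inter_subset_right))
      by_cases hJl : lastF ∈ Bk J
      · have hJu : J = Set.univ := by
          refine Set.eq_univ_of_forall fun j => hJl.2 j ?_
          exact Fin.le_def.mpr (by have := j.isLt; simp [hlast]; omega)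
        rw [hJu, Set.image_univ, hgen, Set.univ_inter]
        exact inf_le_right
      · intro g hg
        obtain ⟨hgJ, hg0⟩ := Subgroup.mem_inf.mp hg
        obtain ⟨b, hb, c, hc, rfl⟩ := hdecomp J g hgJ
        have hcM0 : c ∈ Subgroup.closure (ρ '' M₀) := mono (hCM0 J) hc
        have hbM0 : b ∈ Subgroup.closure (ρ '' M₀) := by
          have := mul_mem hg0 (inv_mem hcM0)
          simpa using this
        have hBM1 : Bk J ⊆ M₁ := by
          intro i hi hival
          exact hJl (by
            have : i = lastF := Fin.ext hival
            rwa [this] at hi)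
        have hbM01 : b ∈ Subgroup.closure (ρ '' (M₀ ∩ M₁)) := by
          rw [← h₃]
          exact Subgroup.mem_inf.mpr ⟨hbM0, mono hBM1 hb⟩
        have hb2 : b ∈ Subgroup.closure (ρ '' (Bk J ∩ (M₀ ∩ M₁))) := by
          rw [← h₂ (Bk J) (M₀ ∩ M₁) hBM1 Set.inter_subset_right]
          exact Subgroup.mem_inf.mpr ⟨hb, hbM01⟩
        refine mul_mem (mono ?_ hb2) (mono ?_ hc)
        · exact fun i hi => ⟨hBsub J hi.1, hi.2.1⟩
        · exact fun i hi => ⟨hi.1, hCM0 J hi⟩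
    have case1 : ∀ I J : Set (Fin n), I ⊆ M₀ →
        Subgroup.closure (ρ '' I) ⊓ Subgroup.closure (ρ '' J) =
          Subgroup.closure (ρ '' (I ∩ J)) := by
      intro I J hI
      refine le_antisymm ?_
        (le_inf (mono Set.inter_subset_left) (mono Set.inter_subset_right))
      intro g hg
      obtain ⟨hgI, hgJ⟩ := Subgroup.mem_inf.mp hg
      have hg0 : g ∈ Subgroup.closure (ρ '' (J ∩ M₀)) := by
        rw [← key0 J]
        exact Subgroup.mem_inf.mpr ⟨hgJ, mono hI hgI⟩
      have : g ∈ Subgroup.closure (ρ '' (I ∩ (J ∩ M₀))) := by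
        rw [← h₁ I (J ∩ M₀) hI Set.inter_subset_right]
        exact Subgroup.mem_inf.mpr ⟨hgI, hg0⟩
      exact mono (show I ∩ (J ∩ M₀) ⊆ I ∩ J from fun i hi => ⟨hi.1, hi.2.1⟩) this
    have case5 : ∀ I J : Set (Fin n), Bk I ⊆ Bk J →
        Subgroup.closure (ρ '' I) ⊓ Subgroup.closure (ρ '' J) ≤
          Subgroup.closure (ρ '' (I ∩ J)) := by
      intro I J hBIJ g hg
      obtain ⟨hgI, hgJ⟩ := Subgroup.mem_inf.mp hg
      obtain ⟨b, hb, c, hc, rfl⟩ := hdecomp I g hgI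
      have hbJ : b ∈ Subgroup.closure (ρ '' J) :=
        mono (fun i hi => hBsub J (hBIJ hi)) hb
      have hcJ : c ∈ Subgroup.closure (ρ '' J) := by
        have := mul_mem (inv_mem hbJ) hgJ
        simpa using this
      have hc2 : c ∈ Subgroup.closure (ρ '' ((I \ Bk I) ∩ J)) := by
        rw [← case1 _ J (hCM0 I)]
        exact Subgroup.mem_inf.mpr ⟨hc, hcJ⟩
      refine mul_mem (mono ?_ hb) (mono ?_ hc2)
      · exact fun i hi => ⟨hBsub I hi, hBsub J (hBIJ hi)⟩
      · exact fun i hi => ⟨hi.1.1, hi.2⟩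
    have Bcomp : ∀ I J : Set (Fin n), Bk I ⊆ Bk J ∨ Bk J ⊆ Bk I := by
      intro I J
      by_contra hcon
      obtain ⟨hnIJ, hnJI⟩ := not_or.mp hcon
      obtain ⟨i, hiI, hiJ⟩ := Set.not_subset.mp hnIJ
      obtain ⟨j, hjJ, hjI⟩ := Set.not_subset.mp hnJI
      rcases le_total i j with hij | hij
      · exact hiJ ⟨hjJ.2 i hij, fun k hk => hjJ.2 k (hk.trans hij)⟩
      · exact hjI ⟨hiI.2 j hij, fun k hk => hiI.2 k (hk.trans hij)⟩
    intro I J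
    refine le_antisymm ?_
      (le_inf (mono Set.inter_subset_left) (mono Set.inter_subset_right))
    rcases Bcomp I J with hB | hB
    · exact case5 I J hB
    · rw [inf_comm, Set.inter_comm]
      exact case5 J I hB
end

section
/- Let G be a group with distinguished involutory generators r_0, ..., r_{n-1} satisfying the string C-group (intersection) property, and let C_2 = ⟨s⟩ be a cyclic group of order 2. Then the direct product G × C_2, with generators r_0, ..., r_{n-1} (each paired with identity) and (1, s), is again a string C-group of rank n+1. -/
section aux

variable {G : Type*} {C : Type*} [Group G] [Group C]

lemma prod_inf_prod' (H₁ H₂ : Subgroup G) (K₁ K₂ : Subgroup C) :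
    H₁.prod K₁ ⊓ H₂.prod K₂ = (H₁ ⊓ H₂).prod (K₁ ⊓ K₂) := by
  ext ⟨x, y⟩
  simp only [Subgroup.mem_inf, Subgroup.mem_prod]
  tauto

lemma closure_pair' (S : Set G) (T : Set C) :
    Subgroup.closure ((fun g => (g, (1 : C))) '' S ∪ (fun c => ((1 : G), c)) '' T)
      = (Subgroup.closure S).prod (Subgroup.closure T) := by
  apply le_antisymm
  · rw [Subgroup.closure_le]
    rintro x (⟨g, hg, rfl⟩ | ⟨c, hc, rfl⟩)
    · exact ⟨Subgroup.subset_closure hg, Subgroup.one_mem _⟩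
    · exact ⟨Subgroup.one_mem _, Subgroup.subset_closure hc⟩
  · rw [Subgroup.prod_le_iff]
    constructor
    · rw [MonoidHom.map_closure, Subgroup.closure_le]
      rintro x ⟨g, hg, rfl⟩
      exact Subgroup.subset_closure (Or.inl ⟨g, hg, rfl⟩)
    · rw [MonoidHom.map_closure, Subgroup.closure_le]
      rintro x ⟨c, hc, rfl⟩
      exact Subgroup.subset_closure (Or.inr ⟨c, hc, rfl⟩)

lemma closure_s_top :
    Subgroup.closure ({Multiplicative.ofAdd (1 : ZMod 2)} : Set (Multiplicative (ZMod 2))) = ⊤ := by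
  rw [eq_top_iff]
  intro x _
  have h : ∀ y : Multiplicative (ZMod 2), y = 1 ∨ y = Multiplicative.ofAdd (1 : ZMod 2) := by
    decide
  rcases h x with rfl | rfl
  · exact Subgroup.one_mem _
  · exact Subgroup.subset_closure rfl

end aux

/-- If `G` with involutory generators `r₀,…,r_{n-1}` is a string C-group, then the direct
product `G × C₂`, with the generators `(rᵢ, 1)` together with the new last generator
`(1, s)` where `s` generates `C₂`, is again a string C-group of rank `n+1`. -/
theorem string_C_group_times_C2 (n : ℕ) (G : Type*) [Group G] (r : Fin n → G)
    (hgen : Subgroup.closure (Set.range r) = ⊤)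
    (hinv : ∀ i, r i * r i = 1)
    (hstring : ∀ i j : Fin n, (i : ℕ) + 2 ≤ (j : ℕ) → Commute (r i) (r j))
    (hIP : ∀ I J : Set (Fin n),
      Subgroup.closure (r '' I) ⊓ Subgroup.closure (r '' J) =
        Subgroup.closure (r '' (I ∩ J)))
    (r' : Fin (n + 1) → G × Multiplicative (ZMod 2))
    (hr' : ∀ i : Fin n, r' i.castSucc = (r i, 1))
    (hlast : r' (Fin.last n) = (1, Multiplicative.ofAdd 1)) :
    (∀ i, r' i * r' i = 1) ∧
    (∀ i j : Fin (n + 1), (i : ℕ) + 2 ≤ (j : ℕ) → Commute (r' i) (r' j)) ∧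
    Subgroup.closure (Set.range r') = ⊤ ∧
    (∀ I J : Set (Fin (n + 1)),
      Subgroup.closure (r' '' I) ⊓ Subgroup.closure (r' '' J) =
        Subgroup.closure (r' '' (I ∩ J))) := by
  classical
  have hs2 : Multiplicative.ofAdd (1 : ZMod 2) * Multiplicative.ofAdd (1 : ZMod 2) = 1 := by decide
  -- image description
  have himage : ∀ I : Set (Fin (n + 1)), r' '' I =
      (fun g => (g, (1 : Multiplicative (ZMod 2)))) '' (r '' (Fin.castSucc ⁻¹' I)) ∪
      (fun c => ((1 : G), c)) ''
        (if Fin.last n ∈ I then {Multiplicative.ofAdd (1 : ZMod 2)} else ∅) := by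
    intro I
    ext x
    constructor
    · rintro ⟨i, hi, rfl⟩
      induction i using Fin.lastCases with
      | last =>
        right
        rw [if_pos hi]
        exact ⟨Multiplicative.ofAdd 1, rfl, hlast.symm⟩
      | cast j =>
        left
        exact ⟨r j, ⟨j, hi, rfl⟩, (hr' j).symm⟩
    · rintro (⟨g, ⟨j, hj, rfl⟩, rfl⟩ | ⟨c, hc, rfl⟩)
      · exact ⟨j.castSucc, hj, hr' j⟩
      · by_cases h : Fin.last n ∈ I
        · rw [if_pos h] at hc
          rcases hc with rfl
          exact ⟨Fin.last n, h, hlast⟩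
        · rw [if_neg h] at hc
          exact absurd hc (Set.notMem_empty c)
  have hclos : ∀ I : Set (Fin (n + 1)), Subgroup.closure (r' '' I) =
      (Subgroup.closure (r '' (Fin.castSucc ⁻¹' I))).prod
        (if Fin.last n ∈ I then ⊤ else ⊥) := by
    intro I
    rw [himage I, closure_pair']
    congr 1
    by_cases h : Fin.last n ∈ I
    · rw [if_pos h, if_pos h, closure_s_top]
    · rw [if_neg h, if_neg h, Subgroup.closure_empty]
  refine ⟨?_, ?_, ?_, ?_⟩
  · intro i
    induction i using Fin.lastCases with
    | last => rw [hlast, Prod.mk_mul_mk, one_mul, hs2]; rfl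
    | cast j => rw [hr' j, Prod.mk_mul_mk, hinv j, one_mul]; rfl
  · intro i j hij
    have hi : (i : ℕ) < n := by
      have := j.is_le
      omega
    have hieq : i = Fin.castSucc ⟨(i : ℕ), hi⟩ := by
      apply Fin.ext; simp
    by_cases hj : (j : ℕ) < n
    · have hjeq : j = Fin.castSucc ⟨(j : ℕ), hj⟩ := by
        apply Fin.ext; simp
      rw [hieq, hjeq, hr', hr']
      unfold Commute SemiconjBy
      rw [Prod.mk_mul_mk, Prod.mk_mul_mk, (hstring _ _ hij).eq]
    · have hjeq : j = Fin.last n := by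
        apply Fin.ext
        simp only [Fin.val_last]
        have := j.is_le
        omega
      rw [hieq, hjeq, hr', hlast]
      unfold Commute SemiconjBy
      rw [Prod.mk_mul_mk, Prod.mk_mul_mk, one_mul, mul_one, one_mul, mul_one]
  · rw [← Set.image_univ, hclos, if_pos (Set.mem_univ _)]
    have : Fin.castSucc ⁻¹' (Set.univ : Set (Fin (n + 1))) = Set.univ := rfl
    rw [this, Set.image_univ, hgen, Subgroup.top_prod_top]
  · intro I J
    rw [hclos, hclos, hclos, prod_inf_prod', hIP, Set.preimage_inter]
    congr 1
    by_cases hI : Fin.last n ∈ I <;> by_cases hJ : Fin.last n ∈ J <;>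
      simp [hI, hJ, Set.mem_inter_iff]
end

section
/- Let V be a singular 2-dimensional quadratic space over Z_p (p odd) with 1-dimensional radical, in which the square norm b·b of every anisotropic vector b is a nonzero square in Z_p. Then Ô_1(V) = Ô(V), i.e., every isometry of V acting trivially on rad V is a product of reflections with roots of square norm, and this group is dihedral of order 2p. -/
namespace OhatAux

variable {p : ℕ} [Fact p.Prime]
variable {V : Type*} [AddCommGroup V] [Module (ZMod p) V]
variable (B : V →ₗ[ZMod p] V →ₗ[ZMod p] ZMod p) (e f : V)

/-- The linear map `v ↦ v + (B v e) • ((ε-1) • e + t • f)`. -/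
noncomputable def Gmap (ε t : ZMod p) : V →ₗ[ZMod p] V :=
  LinearMap.id + (B.flip e).smulRight ((ε - 1) • e + t • f)

lemma Gmap_apply (ε t : ZMod p) (v : V) :
    Gmap B e f ε t v = v + B v e • ((ε - 1) • e + t • f) := by
  simp [Gmap]

lemma Gmap_comp (hee : B e e = 1) (hfe : B f e = 0) (ε t ε' t' : ZMod p) :
    (Gmap B e f ε t).comp (Gmap B e f ε' t') = Gmap B e f (ε * ε') (ε' * t + t') := by
  ext v
  simp only [LinearMap.comp_apply, Gmap_apply, map_add, map_smul, smul_eq_mul, hee, hfe]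
  module

lemma Gmap_id : Gmap B e f 1 0 = LinearMap.id := by
  ext v
  simp [Gmap_apply]

/-- The linear equivalence `v ↦ v + (B v e) • ((ε-1) • e + t • f)` when `ε * ε = 1`. -/
noncomputable def Gequiv (hee : B e e = 1) (hfe : B f e = 0) (ε t : ZMod p) (hε : ε * ε = 1) : V ≃ₗ[ZMod p] V :=
  LinearEquiv.ofLinear (Gmap B e f ε t) (Gmap B e f ε (-(ε * t)))
    (by rw [Gmap_comp B e f hee hfe, hε,
      show ε * t + -(ε * t) = 0 by ring, Gmap_id])
    (by rw [Gmap_comp B e f hee hfe, hε,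
      show ε * -(ε * t) + t = 0 by linear_combination (-t) * hε, Gmap_id])

lemma Gequiv_apply (hee : B e e = 1) (hfe : B f e = 0) (ε t : ZMod p) (hε : ε * ε = 1) (v : V) :
    Gequiv B e f hee hfe ε t hε v = v + B v e • ((ε - 1) • e + t • f) := by
  simp [Gequiv, Gmap_apply]

lemma Gequiv_e (hee : B e e = 1) (hfe : B f e = 0) (ε t : ZMod p) (hε : ε * ε = 1) :
    Gequiv B e f hee hfe ε t hε e = ε • e + t • f := by
  rw [Gequiv_apply, hee]
  module

lemma Gequiv_f (hee : B e e = 1) (hfe : B f e = 0) (ε t : ZMod p) (hε : ε * ε = 1) :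
    Gequiv B e f hee hfe ε t hε f = f := by
  rw [Gequiv_apply, hfe]
  simp

lemma Gequiv_congr (hee : B e e = 1) (hfe : B f e = 0) (ε t ε' t' : ZMod p) (hε : ε * ε = 1) (hε' : ε' * ε' = 1)
    (h1 : ε = ε') (h2 : t = t') :
    Gequiv B e f hee hfe ε t hε = Gequiv B e f hee hfe ε' t' hε' := by
  subst h1; subst h2; rfl

lemma Gequiv_mul (hee : B e e = 1) (hfe : B f e = 0) (ε t ε' t' ε'' t'' : ZMod p) (hε : ε * ε = 1) (hε' : ε' * ε' = 1)
    (hε'' : ε'' * ε'' = 1) (h1 : ε'' = ε * ε') (h2 : t'' = ε' * t + t') :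
    Gequiv B e f hee hfe ε t hε * Gequiv B e f hee hfe ε' t' hε' =
      Gequiv B e f hee hfe ε'' t'' hε'' := by
  apply LinearEquiv.toLinearMap_injective
  have : (Gequiv B e f hee hfe ε t hε * Gequiv B e f hee hfe ε' t' hε' :
      V ≃ₗ[ZMod p] V).toLinearMap =
      (Gmap B e f ε t).comp (Gmap B e f ε' t') := rfl
  rw [this, Gmap_comp B e f hee hfe, ← h1, ← h2]
  rfl

end OhatAux

open OhatAux in
/-- For a singular plane over `ZMod p` with 1-dimensional radical in which every
anisotropic vector has square norm, `Ô₁(V) = Ô(V)`: every isometry fixing the radical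
pointwise is a product of reflections with square-norm roots, and this group is dihedral
of order `2p`. -/
theorem Ohat_one_eq_Ohat (p : ℕ) [hp : Fact p.Prime] (hodd : p ≠ 2)
    (V : Type*) [AddCommGroup V] [Module (ZMod p) V] [FiniteDimensional (ZMod p) V]
    (hdim : Module.finrank (ZMod p) V = 2)
    (B : V →ₗ[ZMod p] V →ₗ[ZMod p] ZMod p) (hsymm : ∀ x y, B x y = B y x)
    (hrad1 : Module.finrank (ZMod p) (LinearMap.BilinForm.orthogonal B ⊤) = 1)
    (hsq : ∀ b : V, B b b ≠ 0 → IsSquare (B b b))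
    (Ohat : Subgroup (V ≃ₗ[ZMod p] V))
    (hOhat : ∀ g, g ∈ Ohat ↔ ((∀ x y, B (g x) (g y) = B x y) ∧
      ∀ x ∈ LinearMap.BilinForm.orthogonal B ⊤, g x = x))
    (Ohat1 : Subgroup (V ≃ₗ[ZMod p] V))
    (hOhat1 : Ohat1 = Subgroup.closure {g | ∃ a, B a a ≠ 0 ∧ IsSquare (B a a) ∧
      ∀ x, g x = x - (2 * B x a * (B a a)⁻¹) • a}) :
    Ohat1 = Ohat ∧ Nonempty (Ohat ≃* DihedralGroup p) := by
  classical
  have hp2 : (2 : ZMod p) ≠ 0 := by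
    have h2 : ((2 : ℕ) : ZMod p) ≠ 0 := by
      rw [Ne, ZMod.natCast_eq_zero_iff]
      intro h
      exact hodd ((Nat.prime_dvd_prime_iff_eq hp.out Nat.prime_two).mp h)
    simpa using h2
  set R := LinearMap.BilinForm.orthogonal B ⊤ with hR
  have hmemR : ∀ x, x ∈ R ↔ ∀ n, B n x = 0 := by
    intro x
    rw [hR, LinearMap.BilinForm.mem_orthogonal_iff]
    constructor
    · intro h n; exact h n trivial
    · intro h n _; exact h n
  -- find `f` spanning the radical
  have hRbot : R ≠ ⊥ := by
    intro h
    rw [h] at hrad1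
    simp at hrad1
  obtain ⟨f, hfR, hf0⟩ := Submodule.ne_bot_iff R |>.mp hRbot
  have hBf : ∀ v, B v f = 0 := fun v => (hmemR f).1 hfR v
  have hBf' : ∀ v, B f v = 0 := fun v => (hsymm f v).trans (hBf v)
  -- find an anisotropic vector
  have hRtop : R ≠ ⊤ := by
    intro h
    rw [h] at hrad1
    rw [finrank_top, hdim] at hrad1
    omega
  obtain ⟨v, hv⟩ : ∃ v, v ∉ R := by
    by_contra h
    push_neg at h
    exact hRtop (Submodule.eq_top_iff'.mpr h)
  obtain ⟨w, hw⟩ : ∃ w, B w v ≠ 0 := by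
    by_contra h
    push_neg at h
    exact hv ((hmemR v).2 h)
  obtain ⟨e0, he0⟩ : ∃ x, B x x ≠ 0 := by
    by_cases h1 : B v v ≠ 0
    · exact ⟨v, h1⟩
    by_cases h2 : B w w ≠ 0
    · exact ⟨w, h2⟩
    push_neg at h1 h2
    refine ⟨v + w, ?_⟩
    have : B (v + w) (v + w) = 2 * B w v := by
      simp only [map_add, LinearMap.add_apply]
      rw [h1, h2, hsymm v w]
      ring
    rw [this]
    exact mul_ne_zero hp2 hw
  -- normalize it
  obtain ⟨s, hs⟩ := hsq e0 he0
  have hs0 : s ≠ 0 := by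
    intro h
    rw [h, mul_zero] at hs
    exact he0 hs
  set e : V := s⁻¹ • e0 with he
  have hee : B e e = 1 := by
    rw [he]
    simp only [map_smul, LinearMap.smul_apply, smul_eq_mul]
    rw [hs]
    field_simp
  have hfe : B f e = 0 := hBf' e
  have hef : B e f = 0 := hBf e
  -- basis facts
  have hli : LinearIndependent (ZMod p) ![e, f] := by
    rw [linearIndependent_fin2]
    refine ⟨by simpa using hf0, ?_⟩
    intro a hc
    simp only [Matrix.cons_val_one, Matrix.head_cons, Matrix.cons_val_zero] at hc
    have h' : B e e = 0 := by rw [← hc]; simp [hBf]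
    rw [hee] at h'
    exact one_ne_zero h'
  have hspan : ∀ u : V, ∃ x y : ZMod p, x • e + y • f = u := by
    intro u
    have h1 : Submodule.span (ZMod p) {e, f} = ⊤ := by
      have h2 := (basisOfLinearIndependentOfCardEqFinrank hli (by simp [hdim])).span_eq
      rw [coe_basisOfLinearIndependentOfCardEqFinrank] at h2
      have h3 : Set.range ![e, f] = {e, f} := by
        ext x
        simp [Fin.exists_fin_two, or_comm]
      rwa [h3] at h2
    have : u ∈ Submodule.span (ZMod p) {e, f} := h1 ▸ Submodule.mem_top
    rwa [Submodule.mem_span_pair] at this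
  have hext : ∀ g g' : V ≃ₗ[ZMod p] V, g e = g' e → g f = g' f → g = g' := by
    intro g g' h1 h2
    ext u
    obtain ⟨x, y, rfl⟩ := hspan u
    simp [map_add, map_smul, h1, h2]
  -- the standard elements
  have hone : (1 : ZMod p) * 1 = 1 := one_mul 1
  have hneg : (-1 : ZMod p) * (-1) = 1 := by ring
  -- membership in Ohat
  have hGmem : ∀ (ε t : ZMod p) (hε : ε * ε = 1),
      Gequiv B e f hee hfe ε t hε ∈ Ohat := by
    intro ε t hε
    rw [hOhat]
    constructor
    · intro x y
      rw [Gequiv_apply, Gequiv_apply]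
      simp only [map_add, map_smul, LinearMap.add_apply, LinearMap.smul_apply, smul_eq_mul,
        hee, hfe, hef, hBf, hBf', hsymm e y]
      linear_combination (B x e * B y e) * hε
    · intro x hx
      have hxe : B x e = 0 := by rw [hsymm]; exact (hmemR x).1 hx e
      rw [Gequiv_apply, hxe]
      simp
  have hsurjG : ∀ g, g ∈ Ohat → ∃ ε t : ZMod p, ∃ hε : ε * ε = 1,
      g = Gequiv B e f hee hfe ε t hε := by
    intro g hg
    rw [hOhat] at hg
    obtain ⟨x, y, hxy⟩ := hspan (g e)
    have h1 : B (g e) (g e) = 1 := by rw [hg.1 e e, hee]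
    rw [← hxy] at h1
    simp only [map_add, map_smul, LinearMap.add_apply, LinearMap.smul_apply, smul_eq_mul,
      hee, hfe, hef, hBf] at h1
    have hε : x * x = 1 := by linear_combination h1
    refine ⟨x, y, hε, ?_⟩
    apply hext
    · rw [Gequiv_e, hxy]
    · rw [Gequiv_f]
      exact hg.2 f hfR
  -- reflections
  set S : Set (V ≃ₗ[ZMod p] V) := {g | ∃ a, B a a ≠ 0 ∧ IsSquare (B a a) ∧
      ∀ x, g x = x - (2 * B x a * (B a a)⁻¹) • a} with hS
  have hrefl0 : ∀ y0 : ZMod p, Gequiv B e f hee hfe (-1) (-(2 * y0)) hneg ∈ S := by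
    intro y0
    refine ⟨e + y0 • f, ?_⟩
    have haa : B (e + y0 • f) (e + y0 • f) = 1 := by
      simp [map_add, map_smul, hee, hef, hBf, hBf', smul_eq_mul]
    rw [haa]
    refine ⟨one_ne_zero, IsSquare.one, ?_⟩
    intro x
    have hxa : B x (e + y0 • f) = B x e := by
      simp [map_add, map_smul, hBf x, smul_eq_mul]
    rw [Gequiv_apply, hxa, inv_one, mul_one]
    module
  have hrefl : ∀ t : ZMod p, Gequiv B e f hee hfe (-1) t hneg ∈ S := by
    intro t
    have ht : t = -(2 * (-(t * 2⁻¹))) := by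
      field_simp
    rw [Gequiv_congr B e f hee hfe (-1) t (-1) (-(2 * (-(t * 2⁻¹)))) hneg hneg rfl ht]
    exact hrefl0 _
  -- closure S ≤ Ohat
  have hSsub : S ⊆ ↑Ohat := by
    rintro g ⟨a, ha0, -, hga⟩
    rw [SetLike.mem_coe, hOhat]
    constructor
    · intro x y
      rw [hga x, hga y]
      simp only [map_sub, map_smul, LinearMap.sub_apply, LinearMap.smul_apply, smul_eq_mul]
      rw [hsymm a y]
      field_simp
      ring
    · intro x hx
      have hxa : B x a = 0 := by rw [hsymm]; exact (hmemR x).1 hx a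
      rw [hga x, hxa]
      simp
  have hOsub : Ohat ≤ Subgroup.closure S := by
    intro g hg
    obtain ⟨ε, t, hε, rfl⟩ := hsurjG g hg
    rcases mul_self_eq_one_iff.mp hε with h1 | h1
    · rw [Gequiv_congr B e f hee hfe ε t 1 t hε hone h1 rfl,
        ← Gequiv_mul B e f hee hfe (-1) 0 (-1) t 1 t hneg hneg hone (by ring) (by ring)]
      exact Subgroup.mul_mem _ (Subgroup.subset_closure (hrefl 0))
        (Subgroup.subset_closure (hrefl t))
    · rw [Gequiv_congr B e f hee hfe ε t (-1) t hε hneg h1 rfl]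
      exact Subgroup.subset_closure (hrefl t)
  have hmain : Ohat1 = Ohat := by
    rw [hOhat1]
    exact le_antisymm ((Subgroup.closure_le _).mpr hSsub) hOsub
  refine ⟨hmain, ?_⟩
  -- the dihedral structure
  let ψ : DihedralGroup p → Ohat := fun x =>
    match x with
    | .r i => ⟨Gequiv B e f hee hfe 1 i hone, hGmem 1 i hone⟩
    | .sr i => ⟨Gequiv B e f hee hfe (-1) i hneg, hGmem (-1) i hneg⟩
  have hψmul : ∀ x y, ψ (x * y) = ψ x * ψ y := by
    rintro (i | i) (j | j) <;>
      apply Subtype.ext <;>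
      simp only [DihedralGroup.r_mul_r, DihedralGroup.r_mul_sr, DihedralGroup.sr_mul_r,
        DihedralGroup.sr_mul_sr, ψ, MulMemClass.mk_mul_mk]
    · exact (Gequiv_mul B e f hee hfe 1 i 1 j 1 (i + j) hone hone hone
        (by ring) (by ring)).symm
    · exact (Gequiv_mul B e f hee hfe 1 i (-1) j (-1) (j - i) hone hneg hneg
        (by ring) (by ring)).symm
    · exact (Gequiv_mul B e f hee hfe (-1) i 1 j (-1) (i + j) hneg hone hneg
        (by ring) (by ring)).symm
    · exact (Gequiv_mul B e f hee hfe (-1) i (-1) j 1 (j - i) hneg hneg hone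
        (by ring) (by ring)).symm
  let Ψ : DihedralGroup p →* Ohat := MonoidHom.mk' ψ hψmul
  have hinj : Function.Injective Ψ := by
    rw [injective_iff_map_eq_one]
    rintro (i | i) h
    · have h1 : Gequiv B e f hee hfe 1 i hone = 1 := Subtype.ext_iff.mp h
      have h2 : Gequiv B e f hee hfe 1 i hone e = e := by rw [h1]; rfl
      rw [Gequiv_e] at h2
      have h3 : i • f = 0 := by
        have := h2
        rw [one_smul] at this
        linear_combination (norm := module) this
      rcases smul_eq_zero.mp h3 with h4 | h4
      · rw [DihedralGroup.one_def, h4]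
      · exact absurd h4 hf0
    · exfalso
      have h1 : Gequiv B e f hee hfe (-1) i hneg = 1 := Subtype.ext_iff.mp h
      have h2 : Gequiv B e f hee hfe (-1) i hneg e = e := by rw [h1]; rfl
      rw [Gequiv_e] at h2
      have h3 : B ((-1 : ZMod p) • e + i • f) e = B e e := by rw [h2]
      simp only [map_add, map_smul, LinearMap.add_apply, LinearMap.smul_apply, smul_eq_mul,
        hee, hfe] at h3
      exact hp2 (by linear_combination -h3)
  have hsurj : Function.Surjective Ψ := by
    rintro ⟨g, hg⟩
    obtain ⟨ε, t, hε, rfl⟩ := hsurjG g hg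
    rcases mul_self_eq_one_iff.mp hε with h1 | h1
    · exact ⟨.r t, Subtype.ext (Gequiv_congr B e f hee hfe 1 t ε t hone hε h1.symm rfl)⟩
    · exact ⟨.sr t, Subtype.ext (Gequiv_congr B e f hee hfe (-1) t ε t hneg hε h1.symm rfl)⟩
  exact ⟨(MulEquiv.ofBijective Ψ ⟨hinj, hsurj⟩).symm⟩
end
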